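/- Let (δᵢ: Cᵢ → Dᵢ)_{i∈I} be frank functors, K⊆I finite, and assume hom(a,b) is finite for all objects a,b of Cᵢ with i∈K. If δᵢ fulfills (P) at aᵢ∈ob(Cᵢ) for each i∈K, then the product functor ⊗_I δᵢ fulfills (P) at the object (aᵢ)_{i∈K} of ⊗_I Cᵢ. -/

import Mathlib

open CategoryTheory

universe v u w

/-- A functor `δ` with domain `C` fulfills (P) at the pair `a, b`. -/
def FulfillsP {C : Type*} [Category C] {D : Type*} [Category D]
    (δ : C ⥤ D) (a b : C) : Prop :=
  ∀ r : ℕ, ∃ c : C, ∀ χ : (a ⟶ c) → Fin r, ∃ g : b ⟶ c,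
    ∀ f₁ f₂ : a ⟶ b, δ.map f₁ = δ.map f₂ → χ (f₁ ≫ g) = χ (f₂ ≫ g)

/-- A functor `δ : C ⥤ D` is frank. -/
def Frank {C : Type*} [Category C] {D : Type*} [Category D] (δ : C ⥤ D) : Prop :=
  ∀ (a : C) (b' : D), ∃ b : C, δ.obj b = b' ∧
    ∀ g' : δ.obj a ⟶ δ.obj b, ∃ f : a ⟶ b, δ.map f = g'

/-- The finitely supported product of the categories `C i`, `i ∈ I`: objects are tuples
`(c i)_{i ∈ K}` for a finite `K ⊆ I`, morphisms are tuples of morphisms between objects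
with the same support (there are no morphisms between different supports). -/
abbrev FinSuppProd (I : Type w) (C : I → Type u) [∀ i, Category.{v} (C i)] :=
  Σ K : Finset I, ∀ i : K, C i.1

/-- The finitely supported product of a family of functors `δ i : C i ⥤ D i`,
acting coordinatewise on objects and morphisms. -/
def finSuppProdFunctor {I : Type w} {C : I → Type u} [∀ i, Category.{v} (C i)]
    {D : I → Type u} [∀ i, Category.{v} (D i)] (δ : ∀ i, C i ⥤ D i) :
    FinSuppProd I C ⥤ FinSuppProd I D :=
  Sigma.Functor.sigma (fun K : Finset I => Functor.pi (fun i : K => δ i.1))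

/-- The product version of (P) for a finite family, proved by induction on a list of
coordinates. -/
lemma piStep {J : Type*} [Finite J] {C : J → Type u} [∀ j, Category.{v} (C j)]
    {D : J → Type u} [∀ j, Category.{v} (D j)] (δ : ∀ j, C j ⥤ D j)
    (a : ∀ j, C j)
    (hfin : ∀ j, ∀ x y : C j, Finite (x ⟶ y))
    (hP : ∀ j, ∀ b : C j, FulfillsP (δ j) (a j) b) :
    ∀ (l : List J), l.Nodup → ∀ (r : ℕ) (b : ∀ j, C j),
    ∃ c : ∀ j, C j, (∀ j ∉ l, c j = b j) ∧
      ∀ χ : (∀ j, a j ⟶ c j) → Fin r, ∃ g : ∀ j, b j ⟶ c j,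
        ∀ f₁ f₂ : ∀ j, a j ⟶ b j,
          (∀ j ∈ l, (δ j).map (f₁ j) = (δ j).map (f₂ j)) →
          (∀ j ∉ l, f₁ j = f₂ j) →
          χ (fun j => f₁ j ≫ g j) = χ (fun j => f₂ j ≫ g j) := by
  intro l
  induction l with
  | nil =>
    intro _ r b
    refine ⟨b, fun _ _ => rfl, fun χ => ⟨fun j => 𝟙 (b j), fun f₁ f₂ _ h => ?_⟩⟩
    have : f₁ = f₂ := funext fun j => h j (by simp)
    rw [this]
  | cons j₀ l' IH =>
    intro hnd r b
    classical
    obtain ⟨hj₀, hnd'⟩ := List.nodup_cons.mp hnd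
    haveI : ∀ j, Finite (a j ⟶ b j) := fun j => hfin j _ _
    obtain ⟨m, ⟨e₁⟩⟩ := Finite.exists_equiv_fin ((∀ j, a j ⟶ b j) → Fin r)
    obtain ⟨c₀, hc₀⟩ := hP j₀ (b j₀) m
    obtain ⟨n, ⟨e₂⟩⟩ := Finite.exists_equiv_fin ((a j₀ ⟶ c₀) → Fin r)
    obtain ⟨c, hcb, hc⟩ := IH hnd' n (Function.update b j₀ c₀)
    have hcj₀ : c₀ = c j₀ := by
      rw [hcb j₀ hj₀, Function.update_self]
    set b' : ∀ j, C j := Function.update b j₀ c₀ with hb'def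
    have hb'ne : ∀ j, j ≠ j₀ → b' j = b j := fun j hj => Function.update_of_ne hj c₀ b
    let e : c₀ ⟶ c j₀ := eqToHom hcj₀
    let eb' : c₀ ⟶ b' j₀ := eqToHom (Function.update_self j₀ c₀ b).symm
    -- the lift of a tuple into `b` to a tuple into `b'`, with prescribed `j₀`-slot
    let L : (∀ j, a j ⟶ b j) → (a j₀ ⟶ c₀) → ∀ j, a j ⟶ b' j := fun h v j =>
      if hh : j = j₀ then cast (congrArg (fun i => a i ⟶ b' i) hh).symm (v ≫ eb')
      else h j ≫ eqToHom (hb'ne j hh).symm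
    have hL₀ : ∀ h v, L h v j₀ = v ≫ eb' := by
      intro h v
      simp only [L, dif_pos rfl]
      rfl
    have hLne : ∀ h v j (hh : j ≠ j₀), L h v j = h j ≫ eqToHom (hb'ne j hh).symm := by
      intro h v j hh
      simp only [L, dif_neg hh]
    refine ⟨c, fun j hj => ?_, ?_⟩
    · have hj1 : j ∉ l' := fun h => hj (List.mem_cons_of_mem _ h)
      have hj2 : j ≠ j₀ := fun h => hj (h ▸ List.mem_cons_self)
      rw [hcb j hj1, hb'ne j hj2]
    intro χ
    -- the coloring for the IH part
    obtain ⟨g', hg'⟩ := hc (fun f => e₂ (fun u => χ (Function.update f j₀ (u ≫ e))))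
    -- the coloring for coordinate j₀
    set ψ : (a j₀ ⟶ c₀) → (∀ j, a j ⟶ b j) → Fin r := fun v h =>
      χ (Function.update (fun j => L h v j ≫ g' j) j₀ (v ≫ e)) with hψdef
    obtain ⟨g₀, hg₀⟩ := hc₀ (fun v => e₁ (ψ v))
    -- the final g
    refine ⟨fun j =>
      if hh : j = j₀ then cast (congrArg (fun i => b i ⟶ c i) hh).symm (g₀ ≫ e)
      else eqToHom (hb'ne j hh).symm ≫ g' j, ?_⟩
    intro f₁ f₂ hmem hnmem
    have key : ∀ f : ∀ j, a j ⟶ b j, ∀ v : a j₀ ⟶ c₀,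
        (fun j => f j ≫ if hh : j = j₀ then
            cast (congrArg (fun i => b i ⟶ c i) hh).symm (g₀ ≫ e)
          else eqToHom (hb'ne j hh).symm ≫ g' j)
        = Function.update (fun j => L f v j ≫ g' j) j₀ ((f j₀ ≫ g₀) ≫ e) := by
      intro f v
      funext j
      by_cases hh : j = j₀
      · subst hh
        rw [Function.update_self, dif_pos rfl]
        show f j ≫ cast rfl (g₀ ≫ e) = (f j ≫ g₀) ≫ e
        rw [cast_eq, Category.assoc]
      · rw [Function.update_of_ne hh, dif_neg hh, hLne f v j hh, Category.assoc]
    -- step 1: vary the rest of the coordinates (via hg')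
    have step1 : ψ (f₁ j₀ ≫ g₀) f₁ = ψ (f₁ j₀ ≫ g₀) f₂ := by
      have h1 := hg' (L f₁ (f₁ j₀ ≫ g₀)) (L f₂ (f₁ j₀ ≫ g₀)) ?_ ?_
      · have h2 := e₂.injective h1
        exact congrFun h2 (f₁ j₀ ≫ g₀)
      · intro j hj
        have hh : j ≠ j₀ := fun h => hj₀ (h ▸ hj)
        rw [hLne _ _ j hh, hLne _ _ j hh, Functor.map_comp, Functor.map_comp,
          hmem j (List.mem_cons_of_mem _ hj)]
      · intro j hj
        by_cases hh : j = j₀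
        · subst hh
          rw [hL₀, hL₀]
        · rw [hLne _ _ j hh, hLne _ _ j hh,
            hnmem j (fun h => (List.mem_cons.mp h).elim hh hj)]
    -- step 2: vary coordinate j₀ (via hg₀)
    have step2 : ψ (f₁ j₀ ≫ g₀) f₂ = ψ (f₂ j₀ ≫ g₀) f₂ := by
      have h1 := hg₀ (f₁ j₀) (f₂ j₀) (hmem j₀ (List.mem_cons_self))
      have h2 := e₁.injective h1
      exact congrFun h2 f₂
    calc χ (fun j => f₁ j ≫ _) = ψ (f₁ j₀ ≫ g₀) f₁ := by rw [hψdef]; rw [key f₁ (f₁ j₀ ≫ g₀)]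
      _ = ψ (f₂ j₀ ≫ g₀) f₂ := step1.trans step2
      _ = χ (fun j => f₂ j ≫ _) := by rw [hψdef]; rw [key f₂ (f₂ j₀ ≫ g₀)]

/-- Let `δ i : C i ⥤ D i` be frank functors, `K ⊆ I` finite, and assume `hom(x,y)` is finite
for all objects `x, y` of `C i` with `i ∈ K`. If `δ i` fulfills (P) at `a i` (i.e. at the
pair `a i, b` for every `b`) for each `i ∈ K`, then the product functor `⊗_I δ i` fulfills
(P) at the object `(a i)_{i ∈ K}` (i.e. at the pair `(a i)_K, b` for every object `b`). -/
theorem fulfillsP_finSuppProdFunctor {I : Type w} {C : I → Type u} [∀ i, Category.{v} (C i)]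
    {D : I → Type u} [∀ i, Category.{v} (D i)] (δ : ∀ i, C i ⥤ D i)
    (hfrank : ∀ i, Frank (δ i))
    (K : Finset I) (a : ∀ i : K, C i.1)
    (hfin : ∀ i ∈ K, ∀ x y : C i, Finite (x ⟶ y))
    (hP : ∀ i : K, ∀ b : C i.1, FulfillsP (δ i.1) (a i) b) :
    ∀ b : FinSuppProd I C, FulfillsP (finSuppProdFunctor δ) ⟨K, a⟩ b := by
  classical
  rintro ⟨L, bf⟩ r
  by_cases hL : L = K
  · subst hL
    obtain ⟨c, -, hc⟩ := piStep (fun j : L => δ j.1) a (fun j x y => hfin j.1 j.2 x y)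
      (fun j b0 => hP j b0) (Finset.univ : Finset ↥L).toList (Finset.nodup_toList _) r bf
    refine ⟨⟨L, c⟩, ?_⟩
    intro χ
    obtain ⟨g, hg⟩ := hc (fun f => χ (Sigma.SigmaHom.mk f))
    refine ⟨Sigma.SigmaHom.mk g, ?_⟩
    intro f₁ f₂ h
    change Sigma.SigmaHom _ _ at f₁ f₂
    cases f₁ with
    | mk F₁ =>
      cases f₂ with
      | mk F₂ =>
        have h' : (Functor.pi (fun i : L => δ i.1)).map F₁
            = (Functor.pi (fun i : L => δ i.1)).map F₂ :=
          (Sigma.incl (C := fun K : Finset I => ∀ i : K, D i.1) L).map_injective h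
        exact hg F₁ F₂ (fun j _ => congrFun h' j)
          (fun j hj => absurd (Finset.mem_toList.mpr (Finset.mem_univ j)) hj)
  · refine ⟨⟨L, bf⟩, fun χ => ⟨𝟙 _, fun f₁ f₂ _ => ?_⟩⟩
    exfalso
    change Sigma.SigmaHom _ _ at f₁
    cases f₁
    exact hL rfl
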